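/- Each operator ė_i (1 ≤ i ≤ n−1) on V^{⊗n} commutes with each of the operators E, F, and K: ė_i ∘ E = E ∘ ė_i, ė_i ∘ F = F ∘ ė_i, and ė_i ∘ K = K ∘ ė_i. -/

import Mathlib

noncomputable section
attribute [local instance] Classical.propDecidable

/-- Balanced quantum integer `[m]` for a natural number `m`. -/
def qintN {k : Type*} [Field k] (v : k) (m : ℕ) : k :=
  ∑ t ∈ Finset.range m, v ^ ((m : ℤ) - 1 - 2 * t)

/-- Balanced quantum integer `[m]` for an integer `m`. -/
def qint {k : Type*} [Field k] (v : k) (m : ℤ) : k :=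
  if 0 ≤ m then qintN v m.toNat else - qintN v (-m).toNat

/-- Quantum factorial `[m]! = [1][2]⋯[m]`. -/
def qfact {k : Type*} [Field k] (v : k) (m : ℕ) : k :=
  ∏ j ∈ Finset.range m, qintN v (j + 1)

/-- The `n`-th tensor power of `V = k²`, realized as coordinate functions with
respect to the basis `y_i`, `i ∈ {1,-1}ⁿ` (here `true ↔ 1`, `false ↔ -1`). -/
abbrev Tn (k : Type*) [Field k] (n : ℕ) := (Fin n → Bool) → k

/-- The sign of an index entry: `true ↦ 1`, `false ↦ -1`. -/
def sgn (b : Bool) : ℤ := if b then 1 else -1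

/-- The weight `i₁ + ⋯ + i_n` of a basis index. -/
def wt {n : ℕ} (i : Fin n → Bool) : ℤ := ∑ t, sgn (i t)

variable {k : Type*} [Field k]

/-- The operator `E` on `V^{⊗n}`. -/
def Eop (v : k) (n : ℕ) : Tn k n →ₗ[k] Tn k n where
  toFun f := fun i =>
    ∑ j ∈ Finset.univ.filter (fun j => i j = true),
      v ^ (∑ t ∈ Finset.univ.filter (fun t => t < j), sgn (i t)) * f (Function.update i j false)
  map_add' f g := by
    funext i
    simp [Pi.add_apply, mul_add, Finset.sum_add_distrib]
  map_smul' c f := by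
    funext i
    simp only [Pi.smul_apply, smul_eq_mul, RingHom.id_apply]
    rw [Finset.mul_sum]
    exact Finset.sum_congr rfl fun j _ => by ring

/-- The operator `F` on `V^{⊗n}`. -/
def Fop (v : k) (n : ℕ) : Tn k n →ₗ[k] Tn k n where
  toFun f := fun i =>
    ∑ j ∈ Finset.univ.filter (fun j => i j = false),
      v ^ (-(∑ t ∈ Finset.univ.filter (fun t => j < t), sgn (i t))) * f (Function.update i j true)
  map_add' f g := by
    funext i
    simp [Pi.add_apply, mul_add, Finset.sum_add_distrib]
  map_smul' c f := by
    funext i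
    simp only [Pi.smul_apply, smul_eq_mul, RingHom.id_apply]
    rw [Finset.mul_sum]
    exact Finset.sum_congr rfl fun j _ => by ring

/-- The operator `K` on `V^{⊗n}`. -/
def Kop (v : k) (n : ℕ) : Tn k n →ₗ[k] Tn k n where
  toFun f := fun i => v ^ (wt i) * f i
  map_add' f g := by
    funext i
    simp [Pi.add_apply, mul_add]
  map_smul' c f := by
    funext i
    simp only [Pi.smul_apply, smul_eq_mul, RingHom.id_apply]
    ring

/-- The symmetric bilinear form on `V^{⊗n}` making the `y_i` orthonormal. -/
def form {n : ℕ} (f g : Tn k n) : k := ∑ i, f i * g i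

/-- Tensoring on the right with the basis vector `y₁` (if `b = true`) or `y₋₁`
(if `b = false`). -/
def tensY {n : ℕ} (b : Bool) (f : Tn k n) : Tn k (n + 1) :=
  fun i => if i (Fin.last n) = b then f (fun t => i t.castSucc) else 0

/-- `Φ₁(b) = b ⊗ y₁`. -/
def Phi1 {n : ℕ} (f : Tn k n) : Tn k (n + 1) := tensY true f

/-- `Φ₂(b) = [w] b ⊗ y₋₁ − v^w (F b) ⊗ y₁`, where `w` is the weight of `b`. -/
def Phi2 (v : k) {n : ℕ} (w : ℤ) (f : Tn k n) : Tn k (n + 1) :=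
  qint v w • tensY false f - v ^ w • tensY true (Fop v n f)

/-- A `1`-factor: all partial sums are nonnegative. -/
def IsOneFactor {n : ℕ} (α : Fin n → Bool) : Prop :=
  ∀ j : Fin n, 0 ≤ ∑ t ∈ Finset.univ.filter (fun t => t ≤ j), sgn (α t)

/-- The orthogonal maximal vectors `Ω(α)`, defined recursively. -/
def Omega (v : k) : (n : ℕ) → (Fin n → Bool) → Tn k n
  | 0, _ => fun _ => 1
  | n + 1, α =>
      if α (Fin.last n) = true then Phi1 (Omega v n fun t => α t.castSucc)
      else Phi2 v (wt fun t => α t.castSucc) (Omega v n fun t => α t.castSucc)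

/-- Exchanging the entries of an index at two positions. -/
def swapPair {n : ℕ} (a b : Fin n) (i : Fin n → Bool) : Fin n → Bool :=
  fun t => if t = a then i b else if t = b then i a else i t

/-- The Temperley--Lieb operator `ė` acting on tensor positions `a` and `b`
(intended: `b = a + 1`). -/
def eop (v : k) {n : ℕ} (a b : Fin n) : Tn k n →ₗ[k] Tn k n where
  toFun f := fun i =>
    if i a = true ∧ i b = false then -v⁻¹ * f i + f (swapPair a b i)
    else if i a = false ∧ i b = true then f (swapPair a b i) - v * f i
    else 0
  map_add' f g := by
    funext i
    simp only [Pi.add_apply]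
    split_ifs <;> ring
  map_smul' c f := by
    funext i
    simp only [Pi.smul_apply, smul_eq_mul, RingHom.id_apply]
    split_ifs <;> ring

/-- The partial sum `α₁ + ⋯ + α_{q-1}` of the entries before position `q`. -/
def prefSum {n : ℕ} (α : Fin n → Bool) (q : Fin n) : ℤ :=
  ∑ t ∈ Finset.univ.filter (fun t => t < q), sgn (α t)

/-- `(i, j)` is a pair of `α`: `α_i = 1` and `j` is the least index `> i` with
`α_i + ⋯ + α_j = 0`. -/
def PairedAt {n : ℕ} (α : Fin n → Bool) (i j : Fin n) : Prop :=
  α i = true ∧ i < j ∧ (∑ t ∈ Finset.Icc i j, sgn (α t)) = 0 ∧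
    ∀ j' : Fin n, i < j' → j' < j → (∑ t ∈ Finset.Icc i j', sgn (α t)) ≠ 0

/-- An index is a defect if it belongs to no pair. -/
def IsDefect {n : ℕ} (α : Fin n → Bool) (i : Fin n) : Prop :=
  (∀ j, ¬ PairedAt α i j) ∧ (∀ j, ¬ PairedAt α j i)

/-- `γ ∈ S(α)`: `γ` is obtained from `α` by negating both entries of each pair
in some subset of the pairs of `α`. -/
def InS {n : ℕ} (α γ : Fin n → Bool) : Prop :=
  (∀ i, IsDefect α i → γ i = α i) ∧
  (∀ i j, PairedAt α i j → (γ i = α i ∧ γ j = α j) ∨ (γ i = !α i ∧ γ j = !α j))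

/-- `σ(α, γ)`: the number of pairs of `α` negated to obtain `γ`. -/
def sigmaCount {n : ℕ} (α γ : Fin n → Bool) : ℕ :=
  Nat.card {p : Fin n × Fin n // PairedAt α p.1 p.2 ∧ γ p.1 ≠ α p.1}

/-- The natural (cellular) vectors `N(α) = Σ_{γ ∈ S(α)} (−v)^{σ(α,γ)} y_γ`,
written in coordinates. -/
def Nvec (v : k) (n : ℕ) (α : Fin n → Bool) : Tn k n :=
  fun γ => if InS α γ then (-v) ^ (sigmaCount α γ) else 0

/-- `β^{(j)}` (0-indexed `j`): change the entry of `β` at the position of its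
`(j+1)`-st defect (0-indexed: defect number `j`) to `−1`. -/
def linkDefect {m : ℕ} (β : Fin m → Bool) (j : ℕ) : Fin m → Bool :=
  match (Finset.sort (Finset.univ.filter (fun i => IsDefect β i)) (· ≤ ·))[j]? with
  | some q => Function.update β q false
  | none => β

section Aux
variable {n : ℕ}

lemma sgn_true : sgn true = 1 := by simp [sgn]
lemma sgn_false : sgn false = -1 := by simp [sgn]

lemma swapPair_self {a b : Fin n} {i : Fin n → Bool} (h : i a = i b) :
    swapPair a b i = i := by
  funext t; simp only [swapPair]; split_ifs <;> simp_all

lemma swapPair_comp (a b : Fin n) (i : Fin n → Bool) :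
    swapPair a b i = fun t => i (Equiv.swap a b t) := by
  funext t
  simp only [swapPair, Equiv.swap_apply_def]
  split_ifs <;> rfl

lemma sum_sgn_swap (a b : Fin n) (i : Fin n → Bool) (s : Finset (Fin n))
    (hs : a ∈ s ↔ b ∈ s) :
    ∑ t ∈ s, sgn (swapPair a b i t) = ∑ t ∈ s, sgn (i t) := by
  rw [swapPair_comp]
  refine Finset.sum_equiv (Equiv.swap a b) ?_ ?_
  · intro t
    rcases eq_or_ne t a with rfl | hta
    · simpa using hs
    rcases eq_or_ne t b with rfl | htb
    · simpa [Equiv.swap_apply_right] using hs.symm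
    · simp [Equiv.swap_apply_of_ne_of_ne hta htb]
  · intro t _; rfl

lemma wt_swapPair (a b : Fin n) (i : Fin n → Bool) : wt (swapPair a b i) = wt i := by
  unfold wt; exact sum_sgn_swap a b i Finset.univ (by simp)

lemma swapPair_update_of_ne {a b j : Fin n} (hja : j ≠ a) (hjb : j ≠ b)
    (i : Fin n → Bool) (c : Bool) :
    swapPair a b (Function.update i j c) = Function.update (swapPair a b i) j c := by
  funext t
  simp only [swapPair, Function.update_apply]
  split_ifs <;> simp_all

lemma swapPair_update_a {a b : Fin n} (hab : a ≠ b) (i : Fin n → Bool) (c : Bool) :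
    swapPair a b (Function.update i a c) = Function.update (swapPair a b i) b c := by
  funext t
  simp only [swapPair, Function.update_apply]
  split_ifs <;> simp_all

lemma swapPair_update_b {a b : Fin n} (hab : a ≠ b) (i : Fin n → Bool) (c : Bool) :
    swapPair a b (Function.update i b c) = Function.update (swapPair a b i) a c := by
  funext t
  simp only [swapPair, Function.update_apply]
  split_ifs <;> simp_all

lemma pref_swap {a b : Fin n} (hab : (a:ℕ) + 1 = b) {j : Fin n} (hjb : j ≠ b)
    (i : Fin n → Bool) :
    ∑ t ∈ Finset.univ.filter (fun t => t < j), sgn (swapPair a b i t)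
      = ∑ t ∈ Finset.univ.filter (fun t => t < j), sgn (i t) := by
  apply sum_sgn_swap
  have hj : (j:ℕ) ≠ (b:ℕ) := fun h => hjb (Fin.ext h)
  simp only [Finset.mem_filter, Finset.mem_univ, true_and, Fin.lt_def]
  omega

lemma suf_swap {a b : Fin n} (hab : (a:ℕ) + 1 = b) {j : Fin n} (hja : j ≠ a)
    (i : Fin n → Bool) :
    ∑ t ∈ Finset.univ.filter (fun t => j < t), sgn (swapPair a b i t)
      = ∑ t ∈ Finset.univ.filter (fun t => j < t), sgn (i t) := by
  apply sum_sgn_swap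
  have hj : (j:ℕ) ≠ (a:ℕ) := fun h => hja (Fin.ext h)
  simp only [Finset.mem_filter, Finset.mem_univ, true_and, Fin.lt_def]
  omega

lemma filter_lt_b {a b : Fin n} (hab : (a:ℕ) + 1 = b) :
    Finset.univ.filter (fun t : Fin n => t < b)
      = insert a (Finset.univ.filter (fun t => t < a)) := by
  ext t
  simp only [Finset.mem_insert, Finset.mem_filter, Finset.mem_univ, true_and,
    Fin.lt_def, Fin.ext_iff]
  omega

lemma filter_gt_a {a b : Fin n} (hab : (a:ℕ) + 1 = b) :
    Finset.univ.filter (fun t : Fin n => a < t)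
      = insert b (Finset.univ.filter (fun t => b < t)) := by
  ext t
  simp only [Finset.mem_insert, Finset.mem_filter, Finset.mem_univ, true_and,
    Fin.lt_def, Fin.ext_iff]
  omega

lemma filter_eq_insert_a {a b : Fin n} (hab : a ≠ b) {i : Fin n → Bool} {c : Bool}
    (h1 : i a = c) (h2 : i b ≠ c) :
    Finset.univ.filter (fun j => i j = c)
      = insert a (Finset.univ.filter fun j => i j = c ∧ j ≠ a ∧ j ≠ b) := by
  ext j
  simp only [Finset.mem_insert, Finset.mem_filter, Finset.mem_univ, true_and]
  constructor
  · intro h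
    rcases eq_or_ne j a with rfl | hja
    · exact Or.inl rfl
    refine Or.inr ⟨h, hja, ?_⟩
    rintro rfl; exact h2 h
  · rintro (rfl | ⟨h, _, _⟩)
    · exact h1
    · exact h

lemma filter_eq_insert_b {a b : Fin n} (hab : a ≠ b) {i : Fin n → Bool} {c : Bool}
    (h1 : i a ≠ c) (h2 : i b = c) :
    Finset.univ.filter (fun j => i j = c)
      = insert b (Finset.univ.filter fun j => i j = c ∧ j ≠ a ∧ j ≠ b) := by
  ext j
  simp only [Finset.mem_insert, Finset.mem_filter, Finset.mem_univ, true_and]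
  constructor
  · intro h
    rcases eq_or_ne j b with rfl | hjb
    · exact Or.inl rfl
    refine Or.inr ⟨h, ?_, hjb⟩
    rintro rfl; exact h1 h
  · rintro (rfl | ⟨h, _, _⟩)
    · exact h2
    · exact h

lemma filter_eq_insert_ab {a b : Fin n} (hab : a ≠ b) {i : Fin n → Bool} {c : Bool}
    (h1 : i a = c) (h2 : i b = c) :
    Finset.univ.filter (fun j => i j = c)
      = insert a (insert b (Finset.univ.filter fun j => i j = c ∧ j ≠ a ∧ j ≠ b)) := by
  ext j
  simp only [Finset.mem_insert, Finset.mem_filter, Finset.mem_univ, true_and]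
  constructor
  · intro h
    rcases eq_or_ne j a with rfl | hja
    · exact Or.inl rfl
    rcases eq_or_ne j b with rfl | hjb
    · exact Or.inr (Or.inl rfl)
    · exact Or.inr (Or.inr ⟨h, hja, hjb⟩)
  · rintro (rfl | rfl | ⟨h, _, _⟩)
    · exact h1
    · exact h2
    · exact h

lemma filter_swap_B (a b : Fin n) (i : Fin n → Bool) (c : Bool) :
    (Finset.univ.filter fun j => swapPair a b i j = c ∧ j ≠ a ∧ j ≠ b)
      = Finset.univ.filter fun j => i j = c ∧ j ≠ a ∧ j ≠ b := by
  ext j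
  simp only [Finset.mem_filter, Finset.mem_univ, true_and]
  simp only [swapPair]
  constructor
  · rintro ⟨h, hja, hjb⟩
    rw [if_neg hja, if_neg hjb] at h
    exact ⟨h, hja, hjb⟩
  · rintro ⟨h, hja, hjb⟩
    rw [if_neg hja, if_neg hjb]
    exact ⟨h, hja, hjb⟩

end Aux


lemma eop_tf (v : k) {n : ℕ} (a b : Fin n) (f : Tn k n) {i : Fin n → Bool}
    (h1 : i a = true) (h2 : i b = false) :
    eop v a b f i = -v⁻¹ * f i + f (swapPair a b i) := by
  simp only [eop, LinearMap.coe_mk, AddHom.coe_mk]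
  rw [if_pos ⟨h1, h2⟩]

lemma eop_ft (v : k) {n : ℕ} (a b : Fin n) (f : Tn k n) {i : Fin n → Bool}
    (h1 : i a = false) (h2 : i b = true) :
    eop v a b f i = f (swapPair a b i) - v * f i := by
  simp only [eop, LinearMap.coe_mk, AddHom.coe_mk]
  rw [if_neg (by simp [h1]), if_pos ⟨h1, h2⟩]

lemma eop_same (v : k) {n : ℕ} (a b : Fin n) (f : Tn k n) {i : Fin n → Bool}
    (h : i a = i b) :
    eop v a b f i = 0 := by
  simp only [eop, LinearMap.coe_mk, AddHom.coe_mk]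
  rw [if_neg, if_neg]
  · rintro ⟨u1, u2⟩; rw [u1, u2] at h; exact Bool.noConfusion h
  · rintro ⟨u1, u2⟩; rw [u1, u2] at h; exact Bool.noConfusion h

lemma split_sub (v : k) {α : Type*} (S : Finset α) (c x y : α → k) :
    ∑ j ∈ S, c j * (x j - v * y j)
      = ∑ j ∈ S, c j * x j - v * ∑ j ∈ S, c j * y j := by
  rw [Finset.mul_sum, ← Finset.sum_sub_distrib]
  exact Finset.sum_congr rfl fun j _ => by ring

lemma split_add (w : k) {α : Type*} (S : Finset α) (c x y : α → k) :
    ∑ j ∈ S, c j * (w * x j + y j)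
      = w * ∑ j ∈ S, c j * x j + ∑ j ∈ S, c j * y j := by
  rw [Finset.mul_sum, ← Finset.sum_add_distrib]
  exact Finset.sum_congr rfl fun j _ => by ring

lemma comm_E (v : k) (hv : v ≠ 0) {n : ℕ} (a b : Fin n)
    (hab : (a:ℕ) + 1 = b) :
    eop v a b ∘ₗ Eop v n = Eop v n ∘ₗ eop v a b := by
  have hne : a ≠ b := by
    intro h; rw [h] at hab; omega
  apply LinearMap.ext; intro f
  funext ι
  have hsa : swapPair a b ι a = ι b := by
    simp [swapPair]
  have hsb : swapPair a b ι b = ι a := by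
    simp [swapPair, Ne.symm hne]
  simp only [LinearMap.comp_apply]
  cases h1 : ι a <;> cases h2 : ι b
  · -- (false, false): both sides vanish
    rw [eop_same v a b _ (h1.trans h2.symm)]
    simp only [Eop, LinearMap.coe_mk, AddHom.coe_mk]
    symm
    apply Finset.sum_eq_zero
    intro j hj
    rw [Finset.mem_filter] at hj
    have hja : j ≠ a := by rintro rfl; rw [h1] at hj; exact Bool.noConfusion hj.2
    have hjb : j ≠ b := by rintro rfl; rw [h2] at hj; exact Bool.noConfusion hj.2
    rw [eop_same v a b f (i := Function.update ι j false)
      (by rw [Function.update_of_ne (Ne.symm hja), Function.update_of_ne (Ne.symm hjb), h1, h2]),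
      mul_zero]
  · -- (false, true)
    rw [h2] at hsa; rw [h1] at hsb
    rw [eop_ft v a b _ h1 h2]
    simp only [Eop, LinearMap.coe_mk, AddHom.coe_mk]
    have hA : Finset.univ.filter (fun j => ι j = true)
        = insert b (Finset.univ.filter fun j => ι j = true ∧ j ≠ a ∧ j ≠ b) :=
      filter_eq_insert_b hne (by simp [h1]) h2
    have hA' : Finset.univ.filter (fun j => swapPair a b ι j = true)
        = insert a (Finset.univ.filter fun j => ι j = true ∧ j ≠ a ∧ j ≠ b) := by
      rw [filter_eq_insert_a hne hsa (by simp [hsb]), filter_swap_B]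
    rw [hA, hA', Finset.sum_insert (by simp), Finset.sum_insert (by simp),
      Finset.sum_insert (by simp)]
    -- index identities
    have hδ : Function.update (swapPair a b ι) a false = Function.update ι b false := by
      rw [← swapPair_update_b hne, swapPair_self]
      rw [Function.update_of_ne hne, Function.update_self, h1]
    -- coefficient identities
    have hPswapA : (∑ t ∈ Finset.univ.filter (fun t => t < a), sgn (swapPair a b ι t))
        = ∑ t ∈ Finset.univ.filter (fun t => t < a), sgn (ι t) :=
      pref_swap hab hne ι
    have hPb : (∑ t ∈ Finset.univ.filter (fun t => t < b), sgn (ι t))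
        = -1 + ∑ t ∈ Finset.univ.filter (fun t => t < a), sgn (ι t) := by
      rw [filter_lt_b hab, Finset.sum_insert (by simp), h1, sgn_false]
    -- the j = b term on the RHS vanishes
    have hZ : eop v a b f (Function.update ι b false) = 0 :=
      eop_same v a b f (by rw [Function.update_of_ne hne, Function.update_self, h1])
    -- B-sums
    have hLB : (∑ j ∈ Finset.univ.filter (fun j => ι j = true ∧ j ≠ a ∧ j ≠ b),
          (v ^ ∑ t ∈ Finset.univ.filter (fun t => t < j), sgn (swapPair a b ι t)) *
            f (Function.update (swapPair a b ι) j false))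
        = ∑ j ∈ Finset.univ.filter (fun j => ι j = true ∧ j ≠ a ∧ j ≠ b),
          (v ^ ∑ t ∈ Finset.univ.filter (fun t => t < j), sgn (ι t)) *
            f (Function.update (swapPair a b ι) j false) := by
      refine Finset.sum_congr rfl fun j hj => ?_
      rw [Finset.mem_filter] at hj
      rw [pref_swap hab hj.2.2.2 ι]
    have hRB : (∑ j ∈ Finset.univ.filter (fun j => ι j = true ∧ j ≠ a ∧ j ≠ b),
          (v ^ ∑ t ∈ Finset.univ.filter (fun t => t < j), sgn (ι t)) *
            eop v a b f (Function.update ι j false))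
        = ∑ j ∈ Finset.univ.filter (fun j => ι j = true ∧ j ≠ a ∧ j ≠ b),
          (v ^ ∑ t ∈ Finset.univ.filter (fun t => t < j), sgn (ι t)) *
            (f (Function.update (swapPair a b ι) j false) - v * f (Function.update ι j false)) := by
      refine Finset.sum_congr rfl fun j hj => ?_
      rw [Finset.mem_filter] at hj
      obtain ⟨-, hjt, hja, hjb⟩ := hj
      rw [eop_ft v a b f (i := Function.update ι j false)
          (by rw [Function.update_of_ne (Ne.symm hja), h1])
          (by rw [Function.update_of_ne (Ne.symm hjb), h2]),
        swapPair_update_of_ne hja hjb]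
    rw [hLB, hRB, hδ, hPswapA, hPb, hZ, mul_zero, zero_add, split_sub v _ _ _ _,
      zpow_add₀ hv, zpow_neg_one]
    field_simp
    ring
  · -- (true, false)
    rw [h2] at hsa; rw [h1] at hsb
    rw [eop_tf v a b _ h1 h2]
    simp only [Eop, LinearMap.coe_mk, AddHom.coe_mk]
    have hA : Finset.univ.filter (fun j => ι j = true)
        = insert a (Finset.univ.filter fun j => ι j = true ∧ j ≠ a ∧ j ≠ b) :=
      filter_eq_insert_a hne h1 (by simp [h2])
    have hA' : Finset.univ.filter (fun j => swapPair a b ι j = true)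
        = insert b (Finset.univ.filter fun j => ι j = true ∧ j ≠ a ∧ j ≠ b) := by
      rw [filter_eq_insert_b hne (by simp [hsa]) hsb, filter_swap_B]
    rw [hA, hA', Finset.sum_insert (by simp), Finset.sum_insert (by simp),
      Finset.sum_insert (by simp)]
    have hδ : Function.update (swapPair a b ι) b false = Function.update ι a false := by
      rw [← swapPair_update_a hne, swapPair_self]
      rw [Function.update_self, Function.update_of_ne (Ne.symm hne), h2]
    have hPswapB : (∑ t ∈ Finset.univ.filter (fun t => t < b), sgn (swapPair a b ι t))
        = -1 + ∑ t ∈ Finset.univ.filter (fun t => t < a), sgn (ι t) := by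
      rw [filter_lt_b hab, Finset.sum_insert (by simp), hsa, sgn_false, pref_swap hab hne ι]
    have hZ : eop v a b f (Function.update ι a false) = 0 :=
      eop_same v a b f
        (by rw [Function.update_self, Function.update_of_ne (Ne.symm hne), h2])
    have hLB : (∑ j ∈ Finset.univ.filter (fun j => ι j = true ∧ j ≠ a ∧ j ≠ b),
          (v ^ ∑ t ∈ Finset.univ.filter (fun t => t < j), sgn (swapPair a b ι t)) *
            f (Function.update (swapPair a b ι) j false))
        = ∑ j ∈ Finset.univ.filter (fun j => ι j = true ∧ j ≠ a ∧ j ≠ b),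
          (v ^ ∑ t ∈ Finset.univ.filter (fun t => t < j), sgn (ι t)) *
            f (Function.update (swapPair a b ι) j false) := by
      refine Finset.sum_congr rfl fun j hj => ?_
      rw [Finset.mem_filter] at hj
      rw [pref_swap hab hj.2.2.2 ι]
    have hRB : (∑ j ∈ Finset.univ.filter (fun j => ι j = true ∧ j ≠ a ∧ j ≠ b),
          (v ^ ∑ t ∈ Finset.univ.filter (fun t => t < j), sgn (ι t)) *
            eop v a b f (Function.update ι j false))
        = ∑ j ∈ Finset.univ.filter (fun j => ι j = true ∧ j ≠ a ∧ j ≠ b),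
          (v ^ ∑ t ∈ Finset.univ.filter (fun t => t < j), sgn (ι t)) *
            (-v⁻¹ * f (Function.update ι j false)
              + f (Function.update (swapPair a b ι) j false)) := by
      refine Finset.sum_congr rfl fun j hj => ?_
      rw [Finset.mem_filter] at hj
      obtain ⟨-, hjt, hja, hjb⟩ := hj
      rw [eop_tf v a b f (i := Function.update ι j false)
          (by rw [Function.update_of_ne (Ne.symm hja), h1])
          (by rw [Function.update_of_ne (Ne.symm hjb), h2]),
        swapPair_update_of_ne hja hjb]
    rw [hLB, hRB, hδ, hPswapB, hZ, mul_zero, zero_add, split_add (-v⁻¹) _ _ _,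
      zpow_add₀ hv, zpow_neg_one]
    field_simp
    ring
  · -- (true, true)
    rw [eop_same v a b _ (h1.trans h2.symm)]
    simp only [Eop, LinearMap.coe_mk, AddHom.coe_mk]
    have hA : Finset.univ.filter (fun j => ι j = true)
        = insert a (insert b (Finset.univ.filter fun j => ι j = true ∧ j ≠ a ∧ j ≠ b)) :=
      filter_eq_insert_ab hne h1 h2
    rw [hA, Finset.sum_insert (by simp [hne]), Finset.sum_insert (by simp)]
    have hB0 : (∑ j ∈ Finset.univ.filter (fun j => ι j = true ∧ j ≠ a ∧ j ≠ b),
          (v ^ ∑ t ∈ Finset.univ.filter (fun t => t < j), sgn (ι t)) *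
            eop v a b f (Function.update ι j false)) = 0 := by
      apply Finset.sum_eq_zero
      intro j hj
      rw [Finset.mem_filter] at hj
      obtain ⟨-, hjt, hja, hjb⟩ := hj
      rw [eop_same v a b f (i := Function.update ι j false)
        (by rw [Function.update_of_ne (Ne.symm hja), Function.update_of_ne (Ne.symm hjb), h1, h2]),
        mul_zero]
    have hZa : eop v a b f (Function.update ι a false)
        = f (Function.update ι b false) - v * f (Function.update ι a false) := by
      rw [eop_ft v a b f (i := Function.update ι a false)
          (Function.update_self a false ι)
          (by rw [Function.update_of_ne (Ne.symm hne), h2]),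
        swapPair_update_a hne, swapPair_self (h1.trans h2.symm)]
    have hZb : eop v a b f (Function.update ι b false)
        = -v⁻¹ * f (Function.update ι b false) + f (Function.update ι a false) := by
      rw [eop_tf v a b f (i := Function.update ι b false)
          (by rw [Function.update_of_ne hne, h1])
          (Function.update_self b false ι),
        swapPair_update_b hne, swapPair_self (h1.trans h2.symm)]
    have hPb : (∑ t ∈ Finset.univ.filter (fun t => t < b), sgn (ι t))
        = 1 + ∑ t ∈ Finset.univ.filter (fun t => t < a), sgn (ι t) := by
      rw [filter_lt_b hab, Finset.sum_insert (by simp), h1, sgn_true]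
    rw [hB0, add_zero, hZa, hZb, hPb, zpow_add₀ hv, zpow_one]
    field_simp
    ring

lemma comm_K (v : k) {n : ℕ} (a b : Fin n) :
    eop v a b ∘ₗ Kop v n = Kop v n ∘ₗ eop v a b := by
  apply LinearMap.ext; intro f
  funext ι
  simp only [LinearMap.comp_apply, eop, Kop, LinearMap.coe_mk, AddHom.coe_mk]
  rw [wt_swapPair]
  split_ifs <;> ring

lemma comm_F (v : k) (hv : v ≠ 0) {n : ℕ} (a b : Fin n)
    (hab : (a:ℕ) + 1 = b) :
    eop v a b ∘ₗ Fop v n = Fop v n ∘ₗ eop v a b := by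
  have hne : a ≠ b := by
    intro h; rw [h] at hab; omega
  apply LinearMap.ext; intro f
  funext ι
  have hsa : swapPair a b ι a = ι b := by
    simp [swapPair]
  have hsb : swapPair a b ι b = ι a := by
    simp [swapPair, Ne.symm hne]
  simp only [LinearMap.comp_apply]
  cases h1 : ι a <;> cases h2 : ι b
  · -- (false, false)
    rw [eop_same v a b _ (h1.trans h2.symm)]
    simp only [Fop, LinearMap.coe_mk, AddHom.coe_mk]
    have hA : Finset.univ.filter (fun j => ι j = false)
        = insert a (insert b (Finset.univ.filter fun j => ι j = false ∧ j ≠ a ∧ j ≠ b)) :=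
      filter_eq_insert_ab hne h1 h2
    rw [hA, Finset.sum_insert (by simp [hne]), Finset.sum_insert (by simp)]
    have hB0 : (∑ j ∈ Finset.univ.filter (fun j => ι j = false ∧ j ≠ a ∧ j ≠ b),
          (v ^ (-(∑ t ∈ Finset.univ.filter (fun t => j < t), sgn (ι t)))) *
            eop v a b f (Function.update ι j true)) = 0 := by
      apply Finset.sum_eq_zero
      intro j hj
      rw [Finset.mem_filter] at hj
      obtain ⟨-, hjt, hja, hjb⟩ := hj
      rw [eop_same v a b f (i := Function.update ι j true)
        (by rw [Function.update_of_ne (Ne.symm hja), Function.update_of_ne (Ne.symm hjb), h1, h2]),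
        mul_zero]
    have hZa : eop v a b f (Function.update ι a true)
        = -v⁻¹ * f (Function.update ι a true) + f (Function.update ι b true) := by
      rw [eop_tf v a b f (i := Function.update ι a true)
          (Function.update_self a true ι)
          (by rw [Function.update_of_ne (Ne.symm hne), h2]),
        swapPair_update_a hne, swapPair_self (h1.trans h2.symm)]
    have hZb : eop v a b f (Function.update ι b true)
        = f (Function.update ι a true) - v * f (Function.update ι b true) := by
      rw [eop_ft v a b f (i := Function.update ι b true)
          (by rw [Function.update_of_ne hne, h1])
          (Function.update_self b true ι),
        swapPair_update_b hne, swapPair_self (h1.trans h2.symm)]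
    have hSa : (-(∑ t ∈ Finset.univ.filter (fun t => a < t), sgn (ι t)))
        = 1 + -(∑ t ∈ Finset.univ.filter (fun t => b < t), sgn (ι t)) := by
      rw [filter_gt_a hab, Finset.sum_insert (by simp), h2, sgn_false]; ring
    rw [hB0, add_zero, hZa, hZb, hSa, zpow_add₀ hv, zpow_one]
    have hvv : v * v⁻¹ = 1 := mul_inv_cancel₀ hv
    linear_combination (v ^ (-∑ t ∈ Finset.univ.filter (fun t => b < t), sgn (ι t)) *
      f (Function.update ι a true)) * hvv
  · -- (false, true)
    rw [h2] at hsa; rw [h1] at hsb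
    rw [eop_ft v a b _ h1 h2]
    simp only [Fop, LinearMap.coe_mk, AddHom.coe_mk]
    have hA : Finset.univ.filter (fun j => ι j = false)
        = insert a (Finset.univ.filter fun j => ι j = false ∧ j ≠ a ∧ j ≠ b) :=
      filter_eq_insert_a hne h1 (by simp [h2])
    have hA' : Finset.univ.filter (fun j => swapPair a b ι j = false)
        = insert b (Finset.univ.filter fun j => ι j = false ∧ j ≠ a ∧ j ≠ b) := by
      rw [filter_eq_insert_b hne (by simp [hsa]) hsb, filter_swap_B]
    rw [hA, hA', Finset.sum_insert (by simp), Finset.sum_insert (by simp),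
      Finset.sum_insert (by simp)]
    have hδ : Function.update (swapPair a b ι) b true = Function.update ι a true := by
      rw [← swapPair_update_a hne, swapPair_self]
      rw [Function.update_self, Function.update_of_ne (Ne.symm hne), h2]
    have hSswapB : (-(∑ t ∈ Finset.univ.filter (fun t => b < t), sgn (swapPair a b ι t)))
        = -(∑ t ∈ Finset.univ.filter (fun t => b < t), sgn (ι t)) := by
      rw [suf_swap hab (Ne.symm hne) ι]
    have hSa : (-(∑ t ∈ Finset.univ.filter (fun t => a < t), sgn (ι t)))
        = -1 + -(∑ t ∈ Finset.univ.filter (fun t => b < t), sgn (ι t)) := by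
      rw [filter_gt_a hab, Finset.sum_insert (by simp), h2, sgn_true]; ring
    have hZ : eop v a b f (Function.update ι a true) = 0 :=
      eop_same v a b f
        (by rw [Function.update_self, Function.update_of_ne (Ne.symm hne), h2])
    have hLB : (∑ j ∈ Finset.univ.filter (fun j => ι j = false ∧ j ≠ a ∧ j ≠ b),
          (v ^ (-(∑ t ∈ Finset.univ.filter (fun t => j < t), sgn (swapPair a b ι t)))) *
            f (Function.update (swapPair a b ι) j true))
        = ∑ j ∈ Finset.univ.filter (fun j => ι j = false ∧ j ≠ a ∧ j ≠ b),
          (v ^ (-(∑ t ∈ Finset.univ.filter (fun t => j < t), sgn (ι t)))) *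
            f (Function.update (swapPair a b ι) j true) := by
      refine Finset.sum_congr rfl fun j hj => ?_
      rw [Finset.mem_filter] at hj
      rw [suf_swap hab hj.2.2.1 ι]
    have hRB : (∑ j ∈ Finset.univ.filter (fun j => ι j = false ∧ j ≠ a ∧ j ≠ b),
          (v ^ (-(∑ t ∈ Finset.univ.filter (fun t => j < t), sgn (ι t)))) *
            eop v a b f (Function.update ι j true))
        = ∑ j ∈ Finset.univ.filter (fun j => ι j = false ∧ j ≠ a ∧ j ≠ b),
          (v ^ (-(∑ t ∈ Finset.univ.filter (fun t => j < t), sgn (ι t)))) *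
            (f (Function.update (swapPair a b ι) j true)
              - v * f (Function.update ι j true)) := by
      refine Finset.sum_congr rfl fun j hj => ?_
      rw [Finset.mem_filter] at hj
      obtain ⟨-, hjt, hja, hjb⟩ := hj
      rw [eop_ft v a b f (i := Function.update ι j true)
          (by rw [Function.update_of_ne (Ne.symm hja), h1])
          (by rw [Function.update_of_ne (Ne.symm hjb), h2]),
        swapPair_update_of_ne hja hjb]
    rw [hLB, hRB, hδ, hSswapB, hSa, hZ, mul_zero, zero_add, split_sub v _ _ _,
      zpow_add₀ hv, zpow_neg_one]
    have hvv : v * v⁻¹ = 1 := mul_inv_cancel₀ hv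
    linear_combination (-(v ^ (-∑ t ∈ Finset.univ.filter (fun t => b < t), sgn (ι t)) *
      f (Function.update ι a true))) * hvv
  · -- (true, false)
    rw [h2] at hsa; rw [h1] at hsb
    rw [eop_tf v a b _ h1 h2]
    simp only [Fop, LinearMap.coe_mk, AddHom.coe_mk]
    have hA : Finset.univ.filter (fun j => ι j = false)
        = insert b (Finset.univ.filter fun j => ι j = false ∧ j ≠ a ∧ j ≠ b) :=
      filter_eq_insert_b hne (by simp [h1]) h2
    have hA' : Finset.univ.filter (fun j => swapPair a b ι j = false)
        = insert a (Finset.univ.filter fun j => ι j = false ∧ j ≠ a ∧ j ≠ b) := by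
      rw [filter_eq_insert_a hne hsa (by simp [hsb]), filter_swap_B]
    rw [hA, hA', Finset.sum_insert (by simp), Finset.sum_insert (by simp),
      Finset.sum_insert (by simp)]
    have hδ : Function.update (swapPair a b ι) a true = Function.update ι b true := by
      rw [← swapPair_update_b hne, swapPair_self]
      rw [Function.update_of_ne hne, Function.update_self, h1]
    have hSswapA : (-(∑ t ∈ Finset.univ.filter (fun t => a < t), sgn (swapPair a b ι t)))
        = -1 + -(∑ t ∈ Finset.univ.filter (fun t => b < t), sgn (ι t)) := by
      rw [filter_gt_a hab, Finset.sum_insert (by simp), hsb, sgn_true,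
        suf_swap hab (Ne.symm hne) ι]
      ring
    have hZ : eop v a b f (Function.update ι b true) = 0 :=
      eop_same v a b f
        (by rw [Function.update_of_ne hne, Function.update_self, h1])
    have hLB : (∑ j ∈ Finset.univ.filter (fun j => ι j = false ∧ j ≠ a ∧ j ≠ b),
          (v ^ (-(∑ t ∈ Finset.univ.filter (fun t => j < t), sgn (swapPair a b ι t)))) *
            f (Function.update (swapPair a b ι) j true))
        = ∑ j ∈ Finset.univ.filter (fun j => ι j = false ∧ j ≠ a ∧ j ≠ b),
          (v ^ (-(∑ t ∈ Finset.univ.filter (fun t => j < t), sgn (ι t)))) *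
            f (Function.update (swapPair a b ι) j true) := by
      refine Finset.sum_congr rfl fun j hj => ?_
      rw [Finset.mem_filter] at hj
      rw [suf_swap hab hj.2.2.1 ι]
    have hRB : (∑ j ∈ Finset.univ.filter (fun j => ι j = false ∧ j ≠ a ∧ j ≠ b),
          (v ^ (-(∑ t ∈ Finset.univ.filter (fun t => j < t), sgn (ι t)))) *
            eop v a b f (Function.update ι j true))
        = ∑ j ∈ Finset.univ.filter (fun j => ι j = false ∧ j ≠ a ∧ j ≠ b),
          (v ^ (-(∑ t ∈ Finset.univ.filter (fun t => j < t), sgn (ι t)))) *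
            (-v⁻¹ * f (Function.update ι j true)
              + f (Function.update (swapPair a b ι) j true)) := by
      refine Finset.sum_congr rfl fun j hj => ?_
      rw [Finset.mem_filter] at hj
      obtain ⟨-, hjt, hja, hjb⟩ := hj
      rw [eop_tf v a b f (i := Function.update ι j true)
          (by rw [Function.update_of_ne (Ne.symm hja), h1])
          (by rw [Function.update_of_ne (Ne.symm hjb), h2]),
        swapPair_update_of_ne hja hjb]
    rw [hLB, hRB, hδ, hSswapA, hZ, mul_zero, zero_add, split_add (-v⁻¹) _ _ _,
      zpow_add₀ hv, zpow_neg_one]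
    ring
  · -- (true, true)
    rw [eop_same v a b _ (h1.trans h2.symm)]
    simp only [Fop, LinearMap.coe_mk, AddHom.coe_mk]
    symm
    apply Finset.sum_eq_zero
    intro j hj
    rw [Finset.mem_filter] at hj
    have hja : j ≠ a := by rintro rfl; rw [h1] at hj; exact Bool.noConfusion hj.2
    have hjb : j ≠ b := by rintro rfl; rw [h2] at hj; exact Bool.noConfusion hj.2
    rw [eop_same v a b f (i := Function.update ι j true)
      (by rw [Function.update_of_ne (Ne.symm hja), Function.update_of_ne (Ne.symm hjb), h1, h2]),
      mul_zero]


/-- each `ė_i` commutes with `E`, `F` and `K` on `V^{⊗n}`. -/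
theorem stmt_9 {k : Type*} [Field k] (v : k) (hv : v ≠ 0) (n : ℕ)
    (i : ℕ) (hi : i + 1 < n) :
    eop v (⟨i, by omega⟩ : Fin n) ⟨i + 1, hi⟩ ∘ₗ Eop v n =
      Eop v n ∘ₗ eop v (⟨i, by omega⟩ : Fin n) ⟨i + 1, hi⟩ ∧
    eop v (⟨i, by omega⟩ : Fin n) ⟨i + 1, hi⟩ ∘ₗ Fop v n =
      Fop v n ∘ₗ eop v (⟨i, by omega⟩ : Fin n) ⟨i + 1, hi⟩ ∧
    eop v (⟨i, by omega⟩ : Fin n) ⟨i + 1, hi⟩ ∘ₗ Kop v n =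
      Kop v n ∘ₗ eop v (⟨i, by omega⟩ : Fin n) ⟨i + 1, hi⟩ := by
  exact ⟨comm_E v hv _ _ rfl, comm_F v hv _ _ rfl, comm_K v _ _⟩
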